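/- Let M and N be smooth manifolds, 𝒱 ⊆ ℂTM an elliptic structure on M and 𝒲 ⊆ ℂTN a complex structure on N, and f : M → N a smooth map with f_*(𝒱_x) = 𝒲_{f(x)} for all x ∈ M. Then for every y ∈ N there is an open neighborhood U of y and a smooth map σ : U → M with f ∘ σ = id_U and σ_*(𝒲_x) ⊆ 𝒱_{σ(x)} for all x ∈ U. -/

import Mathlib

open TensorProduct Manifold

set_option maxHeartbeats 1000000
set_option synthInstance.maxHeartbeats 400000

/-- Conjugation on the complexification `ℂ ⊗[ℝ] X` of a real vector space. -/
noncomputable def conjC (X : Type*) [AddCommGroup X] [Module ℝ X] :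
    (ℂ ⊗[ℝ] X) →ₗ[ℝ] ℂ ⊗[ℝ] X :=
  TensorProduct.map Complex.conjAe.toLinearMap LinearMap.id

/-- The standard elliptic structure on `ℂ^ν × ℝ^k`, inside the complexified
tangent space: the span of `∂/∂z̄_1,…,∂/∂z̄_ν, ∂/∂t_1,…,∂/∂t_k`. -/
noncomputable def Vstd (ν k : ℕ) :
    Submodule ℂ (ℂ ⊗[ℝ] ((Fin ν → ℂ) × (Fin k → ℝ))) :=
  Submodule.span ℂ
    ((Set.range fun j : Fin ν =>
        (1 : ℂ) ⊗ₜ[ℝ] (((Pi.single j 1 : Fin ν → ℂ), (0 : Fin k → ℝ))) +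
          Complex.I •
            ((1 : ℂ) ⊗ₜ[ℝ] (((Pi.single j Complex.I : Fin ν → ℂ), (0 : Fin k → ℝ))))) ∪
      (Set.range fun l : Fin k =>
        (1 : ℂ) ⊗ₜ[ℝ] (((0 : Fin ν → ℂ), (Pi.single l 1 : Fin k → ℝ)))))

/-- The standard complex structure on `ℂ^ν`: the span of `∂/∂w̄_1,…,∂/∂w̄_ν`. -/
noncomputable def Wstd (ν : ℕ) : Submodule ℂ (ℂ ⊗[ℝ] (Fin ν → ℂ)) :=
  Submodule.span ℂ (Set.range fun j : Fin ν =>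
    (1 : ℂ) ⊗ₜ[ℝ] (Pi.single j 1 : Fin ν → ℂ) +
      Complex.I • ((1 : ℂ) ⊗ₜ[ℝ] (Pi.single j Complex.I : Fin ν → ℂ)))

namespace Stmt16

variable {ν k : ℕ}

/-- conjugation on `ℂ^ν`, as a real-linear map -/
noncomputable def conjPi (ν : ℕ) : (Fin ν → ℂ) →ₗ[ℝ] (Fin ν → ℂ) :=
  LinearMap.pi fun i => Complex.conjAe.toLinearMap ∘ₗ LinearMap.proj i

@[simp] lemma conjPi_apply (v : Fin ν → ℂ) (i : Fin ν) :
    conjPi ν v i = starRingEnd ℂ (v i) := rfl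

/-- auxiliary map `ℂ ⊗ ℂ^ν → ℂ^ν`, `c ⊗ v ↦ c • S v` -/
noncomputable def phiAux (S : (Fin ν → ℂ) →ₗ[ℝ] (Fin ν → ℂ)) :
    (ℂ ⊗[ℝ] (Fin ν → ℂ)) →ₗ[ℂ] (Fin ν → ℂ) :=
  TensorProduct.AlgebraTensorModule.lift (LinearMap.toSpanSingleton ℂ _ S)

@[simp] lemma phiAux_tmul (S : (Fin ν → ℂ) →ₗ[ℝ] (Fin ν → ℂ)) (c : ℂ) (v : Fin ν → ℂ) :
    phiAux S (c ⊗ₜ[ℝ] v) = c • S v := by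
  simp [phiAux, TensorProduct.AlgebraTensorModule.lift_tmul]

noncomputable def phiP (ν : ℕ) := phiAux (LinearMap.id (R := ℝ) (M := Fin ν → ℂ))
noncomputable def phiM (ν : ℕ) := phiAux (conjPi ν)

/-- the anti-holomorphic vector associated with `v` -/
noncomputable def wv (v : Fin ν → ℂ) : ℂ ⊗[ℝ] (Fin ν → ℂ) :=
  (1 : ℂ) ⊗ₜ[ℝ] v + Complex.I • ((1 : ℂ) ⊗ₜ[ℝ] (Complex.I • v))

lemma Wstd_gen (j : Fin ν) :
    (1 : ℂ) ⊗ₜ[ℝ] (Pi.single j 1 : Fin ν → ℂ) +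
      Complex.I • ((1 : ℂ) ⊗ₜ[ℝ] (Pi.single j Complex.I : Fin ν → ℂ)) =
      wv (Pi.single j 1) := by
  have : (Pi.single j Complex.I : Fin ν → ℂ) = Complex.I • (Pi.single j 1 : Fin ν → ℂ) := by
    funext i
    by_cases h : j = i <;> simp [Pi.single_apply, h]
  rw [wv, this]

lemma wv_add (v w : Fin ν → ℂ) : wv (v + w) = wv v + wv w := by
  simp only [wv, smul_add, TensorProduct.tmul_add]
  module

lemma wv_real_smul (r : ℝ) (v : Fin ν → ℂ) : wv (r • v) = r • wv v := by
  rw [wv, wv, smul_add, smul_comm Complex.I r v, TensorProduct.tmul_smul,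
    TensorProduct.tmul_smul, smul_comm Complex.I r]

lemma wv_I (v : Fin ν → ℂ) : wv (Complex.I • v) = -(Complex.I • wv v) := by
  simp only [wv, smul_smul, Complex.I_mul_I, neg_smul, one_smul, TensorProduct.tmul_neg,
    smul_add, smul_neg]
  module

lemma real_smul_eq (r : ℝ) (x : ℂ ⊗[ℝ] (Fin ν → ℂ)) : r • x = (r : ℂ) • x := by
  rw [← algebraMap_smul ℂ r x, Complex.coe_algebraMap]

lemma wv_smul (c : ℂ) (v : Fin ν → ℂ) : wv (c • v) = (starRingEnd ℂ c) • wv v := by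
  have hdec : c • v = (c.re : ℝ) • v + (c.im : ℝ) • (Complex.I • v) := by
    funext i
    simp only [Pi.add_apply, Pi.smul_apply, Complex.real_smul, smul_eq_mul]
    rw [← Complex.re_add_im c]; ring_nf
    simp [Complex.ext_iff]; ring_nf; constructor <;> trivial
  calc wv (c • v) = (c.re : ℝ) • wv v + (c.im : ℝ) • wv (Complex.I • v) := by
        rw [hdec, wv_add, wv_real_smul, wv_real_smul]
    _ = (c.re : ℂ) • wv v + (c.im : ℂ) • -(Complex.I • wv v) := by
        rw [wv_I, real_smul_eq, real_smul_eq]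
    _ = (starRingEnd ℂ c) • wv v := by
        have hc : (starRingEnd ℂ) c = (c.re : ℂ) - (c.im : ℂ) * Complex.I := by
          apply Complex.ext <;> simp
        rw [hc]
        module

lemma wv_mem_Wstd (v : Fin ν → ℂ) : wv v ∈ Wstd ν := by
  have hv : v ∈ Submodule.span ℂ (Set.range fun j : Fin ν => (Pi.single j 1 : Fin ν → ℂ)) := by
    have h := (Pi.basisFun ℂ (Fin ν)).span_eq
    have hb : ⇑(Pi.basisFun ℂ (Fin ν)) = fun j : Fin ν => (Pi.single j 1 : Fin ν → ℂ) := by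
      funext j; simp
    rw [hb] at h
    rw [h]; trivial
  refine Submodule.span_induction (p := fun v _ => wv v ∈ Wstd ν) ?_ ?_ ?_ ?_ hv
  · rintro x ⟨j, rfl⟩
    exact Submodule.subset_span ⟨j, Wstd_gen j⟩
  · simp only [wv, smul_zero, TensorProduct.tmul_zero, smul_zero, add_zero]
    exact Submodule.zero_mem _
  · intro x y _ _ hx hy
    rw [wv_add]; exact Submodule.add_mem _ hx hy
  · intro c x _ hx
    rw [wv_smul]; exact Submodule.smul_mem _ _ hx

@[simp] lemma phiP_wv (v : Fin ν → ℂ) : phiP ν (wv v) = 0 := by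
  simp [phiP, wv, smul_smul]

@[simp] lemma phiM_wv (v : Fin ν → ℂ) : phiM ν (wv v) = (2 : ℂ) • conjPi ν v := by
  have h : conjPi ν (Complex.I • v) = -(Complex.I • conjPi ν v) := by
    funext i; simp [Complex.conj_I, neg_mul]
  simp [phiM, wv, h, smul_smul, Complex.I_mul_I]
  module

lemma Wstd_le_ker_phiP : Wstd ν ≤ LinearMap.ker (phiP ν) := by
  rw [Wstd, Submodule.span_le]
  rintro x (⟨j, rfl⟩)
  simp [Wstd_gen]

lemma real_mem_Wstd {u : Fin ν → ℂ} (h : (1 : ℂ) ⊗ₜ[ℝ] u ∈ Wstd ν) : u = 0 := by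
  have := Wstd_le_ker_phiP h
  simpa [phiP] using this

lemma wv_eq_zero {v : Fin ν → ℂ} (h : wv v = 0) : v = 0 := by
  have h2 := congrArg (phiM ν) h
  rw [phiM_wv, map_zero] at h2
  have : conjPi ν v = 0 := by
    have := smul_right_injective (Fin ν → ℂ) (two_ne_zero (α := ℂ))
    exact this (by simpa using h2)
  funext i
  have h4 : starRingEnd ℂ (v i) = 0 := congrFun this i
  simpa using congrArg (starRingEnd ℂ) h4

lemma smul_decomp (c : ℂ) (v : Fin ν → ℂ) :
    c • v = (c.re : ℝ) • v + (c.im : ℝ) • (Complex.I • v) := by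
  funext i
  simp only [Pi.add_apply, Pi.smul_apply, Complex.real_smul, smul_eq_mul]
  rw [← Complex.re_add_im c]; ring_nf
  simp [Complex.ext_iff]; ring_nf; constructor <;> trivial

lemma wv_zero : wv (0 : Fin ν → ℂ) = 0 := by
  simp [wv]

lemma baseChange_wv (T : (Fin ν → ℂ) →ₗ[ℝ] (Fin ν → ℂ)) (v : Fin ν → ℂ) :
    T.baseChange ℂ (wv v) =
      (1 : ℂ) ⊗ₜ[ℝ] T v + Complex.I • ((1 : ℂ) ⊗ₜ[ℝ] T (Complex.I • v)) := by
  simp [wv]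

lemma cLin_I_of_le (T : (Fin ν → ℂ) →ₗ[ℝ] (Fin ν → ℂ))
    (h : Submodule.map (T.baseChange ℂ) (Wstd ν) ≤ Wstd ν) (v : Fin ν → ℂ) :
    T (Complex.I • v) = Complex.I • T v := by
  have h1 : T.baseChange ℂ (wv v) ∈ Wstd ν :=
    h (Submodule.mem_map_of_mem (wv_mem_Wstd v))
  have h2 := Wstd_le_ker_phiP h1
  rw [LinearMap.mem_ker, baseChange_wv] at h2
  simp only [map_add, map_smul, phiP, phiAux_tmul, LinearMap.id_coe, id_eq, one_smul] at h2
  have h3 := congrArg (fun x => Complex.I • x) h2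
  simp only [smul_add, smul_smul, Complex.I_mul_I, smul_zero, neg_smul, one_smul] at h3
  rw [add_neg_eq_zero] at h3
  exact h3.symm

lemma cLin_of_le (T : (Fin ν → ℂ) →ₗ[ℝ] (Fin ν → ℂ))
    (h : Submodule.map (T.baseChange ℂ) (Wstd ν) ≤ Wstd ν) (c : ℂ) (v : Fin ν → ℂ) :
    T (c • v) = c • T v := by
  rw [smul_decomp c v, map_add, map_smul, map_smul, cLin_I_of_le T h v,
    smul_decomp c (T v), smul_comm]

lemma baseChange_wv_cLin (T : (Fin ν → ℂ) →ₗ[ℝ] (Fin ν → ℂ))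
    (hI : ∀ v, T (Complex.I • v) = Complex.I • T v) (v : Fin ν → ℂ) :
    T.baseChange ℂ (wv v) = wv (T v) := by
  rw [baseChange_wv, hI, wv]

lemma bijective_of_map_Wstd (T : (Fin ν → ℂ) →ₗ[ℝ] (Fin ν → ℂ))
    (h : Submodule.map (T.baseChange ℂ) (Wstd ν) = Wstd ν) :
    Function.Bijective T := by
  have hI := cLin_I_of_le T h.le
  have hres : ∀ x ∈ Wstd ν, T.baseChange ℂ x ∈ Wstd ν := fun x hx =>
    h.le (Submodule.mem_map_of_mem hx)
  set T' : Wstd ν →ₗ[ℂ] Wstd ν := (T.baseChange ℂ).restrict hres with hT'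
  have hsurj : Function.Surjective T' := by
    rintro ⟨w, hw⟩
    rw [← h] at hw
    obtain ⟨x, hx, rfl⟩ := hw
    exact ⟨⟨x, hx⟩, rfl⟩
  have hinj : Function.Injective T' :=
    (LinearMap.injective_iff_surjective (f := T')).mpr hsurj
  have hTinj : Function.Injective T := by
    rw [injective_iff_map_eq_zero']
    refine fun v => ⟨fun hv => ?_, fun hv => by rw [hv, map_zero]⟩
    have h0 : T' ⟨wv v, wv_mem_Wstd v⟩ = 0 := by
      apply Subtype.ext
      show T.baseChange ℂ (wv v) = 0
      rw [baseChange_wv_cLin T hI, hv, wv_zero]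
    have := hinj (a₁ := ⟨wv v, wv_mem_Wstd v⟩) (a₂ := 0) (by rw [h0]; rfl)
    have hwv0 : wv v = 0 := congrArg Subtype.val this
    exact wv_eq_zero hwv0
  exact ⟨hTinj, (LinearMap.injective_iff_surjective).mp hTinj⟩

lemma map_Wstd_inverse (T B : (Fin ν → ℂ) →ₗ[ℝ] (Fin ν → ℂ))
    (h : Submodule.map (T.baseChange ℂ) (Wstd ν) = Wstd ν)
    (hTB : T ∘ₗ B = LinearMap.id) :
    Submodule.map (B.baseChange ℂ) (Wstd ν) = Wstd ν := by
  have hbij := bijective_of_map_Wstd T h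
  have hBT : B ∘ₗ T = LinearMap.id := by
    apply LinearMap.ext
    intro v
    apply hbij.injective
    have := LinearMap.congr_fun hTB (T v)
    simpa using this
  calc Submodule.map (B.baseChange ℂ) (Wstd ν)
      = Submodule.map (B.baseChange ℂ) (Submodule.map (T.baseChange ℂ) (Wstd ν)) := by rw [h]
    _ = Submodule.map ((B ∘ₗ T).baseChange ℂ) (Wstd ν) := by
        rw [LinearMap.baseChange_comp, Submodule.map_comp]
    _ = Wstd ν := by rw [hBT, LinearMap.baseChange_id, Submodule.map_id]

lemma Vstd_gen1 (j : Fin ν) :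
    (1 : ℂ) ⊗ₜ[ℝ] (((Pi.single j 1 : Fin ν → ℂ), (0 : Fin k → ℝ))) +
      Complex.I • ((1 : ℂ) ⊗ₜ[ℝ] (((Pi.single j Complex.I : Fin ν → ℂ), (0 : Fin k → ℝ)))) =
      (LinearMap.inl ℝ (Fin ν → ℂ) (Fin k → ℝ)).baseChange ℂ (wv (Pi.single j 1)) := by
  have h1 : (Pi.single j Complex.I : Fin ν → ℂ) = Complex.I • (Pi.single j 1 : Fin ν → ℂ) := by
    funext i
    by_cases h : j = i <;> simp [Pi.single_apply, h]
  simp [wv, h1, LinearMap.inl]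

lemma map_inl_Wstd_le :
    Submodule.map ((LinearMap.inl ℝ (Fin ν → ℂ) (Fin k → ℝ)).baseChange ℂ) (Wstd ν)
      ≤ Vstd ν k := by
  rw [Wstd, Submodule.map_span, Submodule.span_le]
  rintro x ⟨px, ⟨j, rfl⟩, rfl⟩
  simp only [Wstd_gen]
  exact Submodule.subset_span (Or.inl ⟨j, Vstd_gen1 j⟩)

lemma inl_wv_mem_Vstd (v : Fin ν → ℂ) :
    (LinearMap.inl ℝ (Fin ν → ℂ) (Fin k → ℝ)).baseChange ℂ (wv v) ∈ Vstd ν k :=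
  map_inl_Wstd_le (Submodule.mem_map_of_mem (wv_mem_Wstd v))

lemma main_la (T : ((Fin ν → ℂ) × (Fin k → ℝ)) →ₗ[ℝ] (Fin ν → ℂ))
    (h : Submodule.map (T.baseChange ℂ) (Vstd ν k) = Wstd ν) :
    (T ∘ₗ LinearMap.inr ℝ (Fin ν → ℂ) (Fin k → ℝ) = 0) ∧
    Submodule.map ((T ∘ₗ LinearMap.inl ℝ (Fin ν → ℂ) (Fin k → ℝ)).baseChange ℂ) (Wstd ν)
      = Wstd ν := by
  have hzero : ∀ l : Fin k, T (0, Pi.single l 1) = 0 := by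
    intro l
    have hmem : ((1 : ℂ) ⊗ₜ[ℝ] (((0 : Fin ν → ℂ), (Pi.single l 1 : Fin k → ℝ)))) ∈ Vstd ν k :=
      Submodule.subset_span (Or.inr ⟨l, rfl⟩)
    have h1 : T.baseChange ℂ ((1 : ℂ) ⊗ₜ[ℝ] (((0 : Fin ν → ℂ), (Pi.single l 1 : Fin k → ℝ))))
        ∈ Wstd ν := h ▸ Submodule.mem_map_of_mem hmem
    rw [LinearMap.baseChange_tmul] at h1
    exact real_mem_Wstd h1
  constructor
  · apply (Pi.basisFun ℝ (Fin k)).ext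
    intro l
    simpa using hzero l
  · apply le_antisymm
    · rw [LinearMap.baseChange_comp, Submodule.map_comp]
      exact le_trans (Submodule.map_mono map_inl_Wstd_le) (le_of_eq h)
    · nth_rewrite 1 [← h]
      rw [Vstd, Submodule.map_span, Submodule.span_le]
      rintro x ⟨px, hpx, rfl⟩
      rcases hpx with ⟨j, rfl⟩ | ⟨l, rfl⟩
      · simp only [Vstd_gen1]
        have heq : T.baseChange ℂ
            ((LinearMap.inl ℝ (Fin ν → ℂ) (Fin k → ℝ)).baseChange ℂ (wv (Pi.single j 1)))
            = (T ∘ₗ LinearMap.inl ℝ (Fin ν → ℂ) (Fin k → ℝ)).baseChange ℂ (wv (Pi.single j 1)) := by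
          rw [LinearMap.baseChange_comp]; rfl
        rw [heq]
        exact Submodule.mem_map_of_mem (wv_mem_Wstd _)
      · have : T.baseChange ℂ ((1 : ℂ) ⊗ₜ[ℝ] (((0 : Fin ν → ℂ), (Pi.single l 1 : Fin k → ℝ))))
            = 0 := by
          rw [LinearMap.baseChange_tmul, hzero l, TensorProduct.tmul_zero]
        rw [this]
        exact Submodule.zero_mem _

/-- For a chart `e` which is smooth with smooth inverse, the manifold derivatives of
`e` and `e.symm` are mutually inverse. -/
lemma chart_deriv_inverse
    {E : Type*} [NormedAddCommGroup E] [NormedSpace ℝ E]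
    {M : Type*} [TopologicalSpace M] [ChartedSpace E M]
    [IsManifold 𝓘(ℝ, E) ((⊤ : ℕ∞) : WithTop ℕ∞) M]
    (e : OpenPartialHomeomorph M E)
    (he : ContMDiffOn 𝓘(ℝ, E) 𝓘(ℝ, E) (⊤ : ℕ∞) (⇑e) e.source)
    (hes : ContMDiffOn 𝓘(ℝ, E) 𝓘(ℝ, E) (⊤ : ℕ∞) (⇑e.symm) e.target)
    {q : M} (hq : q ∈ e.source) :
    (mfderiv 𝓘(ℝ, E) 𝓘(ℝ, E) (⇑e.symm) (e q)).comp (mfderiv 𝓘(ℝ, E) 𝓘(ℝ, E) (⇑e) q)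
      = ContinuousLinearMap.id ℝ E ∧
    (mfderiv 𝓘(ℝ, E) 𝓘(ℝ, E) (⇑e) q).comp (mfderiv 𝓘(ℝ, E) 𝓘(ℝ, E) (⇑e.symm) (e q))
      = ContinuousLinearMap.id ℝ E := by
  have hqt : e q ∈ e.target := e.map_source hq
  have hde : MDifferentiableAt 𝓘(ℝ, E) 𝓘(ℝ, E) (⇑e) q :=
    (he.contMDiffAt (e.open_source.mem_nhds hq)).mdifferentiableAt (by simp)
  have hdes : MDifferentiableAt 𝓘(ℝ, E) 𝓘(ℝ, E) (⇑e.symm) (e q) :=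
    (hes.contMDiffAt (e.open_target.mem_nhds hqt)).mdifferentiableAt (by simp)
  constructor
  · have h1 : (⇑e.symm ∘ ⇑e) =ᶠ[nhds q] id := by
      filter_upwards [e.open_source.mem_nhds hq] with x hx
      exact e.left_inv hx
    have h2 := mfderiv_comp (I := 𝓘(ℝ, E)) (I' := 𝓘(ℝ, E)) (I'' := 𝓘(ℝ, E)) q hdes hde
    rw [← h2, h1.mfderiv_eq, mfderiv_id]
    rfl
  · have h1 : (⇑e ∘ ⇑e.symm) =ᶠ[nhds (e q)] id := by
      filter_upwards [e.open_target.mem_nhds hqt] with x hx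
      exact e.right_inv hx
    have hqq : e.symm (e q) = q := e.left_inv hq
    have hde' : MDifferentiableAt 𝓘(ℝ, E) 𝓘(ℝ, E) (⇑e) (e.symm (e q)) := by
      rw [hqq]; exact hde
    have h2 := mfderiv_comp (I := 𝓘(ℝ, E)) (I' := 𝓘(ℝ, E)) (I'' := 𝓘(ℝ, E)) (e q) hde' hdes
    rw [h1.mfderiv_eq, mfderiv_id, hqq] at h2
    exact h2.symm

/-- Transfer a submodule along inverse derivatives. -/
lemma map_inverse_of_comp_id {E F : Type*}
    [AddCommGroup E] [Module ℝ E] [AddCommGroup F] [Module ℝ F]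
    (A : E →ₗ[ℝ] F) (B : F →ₗ[ℝ] E) (hBA : B ∘ₗ A = LinearMap.id)
    (P : Submodule ℂ (ℂ ⊗[ℝ] E)) (Q : Submodule ℂ (ℂ ⊗[ℝ] F))
    (h : Submodule.map (A.baseChange ℂ) P = Q) :
    Submodule.map (B.baseChange ℂ) Q = P := by
  rw [← h, ← Submodule.map_comp, ← LinearMap.baseChange_comp, hBA, LinearMap.baseChange_id,
    Submodule.map_id]

lemma map_comp3 {E F G H : Type*}
    [AddCommGroup E] [Module ℝ E] [AddCommGroup F] [Module ℝ F]
    [AddCommGroup G] [Module ℝ G] [AddCommGroup H] [Module ℝ H]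
    (a : E →ₗ[ℝ] F) (b : F →ₗ[ℝ] G) (c : G →ₗ[ℝ] H)
    (P : Submodule ℂ (ℂ ⊗[ℝ] E)) (Q : Submodule ℂ (ℂ ⊗[ℝ] F))
    (R : Submodule ℂ (ℂ ⊗[ℝ] G)) (S : Submodule ℂ (ℂ ⊗[ℝ] H))
    (ha : Submodule.map (a.baseChange ℂ) P = Q) (hb : Submodule.map (b.baseChange ℂ) Q = R)
    (hc : Submodule.map (c.baseChange ℂ) R = S) :
    Submodule.map ((c ∘ₗ b ∘ₗ a).baseChange ℂ) P = S := by
  rw [LinearMap.baseChange_comp, LinearMap.baseChange_comp, Submodule.map_comp,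
    Submodule.map_comp, ha, hb, hc]

lemma map_comp4_le {E F G H J : Type*}
    [AddCommGroup E] [Module ℝ E] [AddCommGroup F] [Module ℝ F]
    [AddCommGroup G] [Module ℝ G] [AddCommGroup H] [Module ℝ H] [AddCommGroup J] [Module ℝ J]
    (a : E →ₗ[ℝ] F) (b : F →ₗ[ℝ] G) (c : G →ₗ[ℝ] H) (d : H →ₗ[ℝ] J)
    (P : Submodule ℂ (ℂ ⊗[ℝ] E)) (Q : Submodule ℂ (ℂ ⊗[ℝ] F))
    (Q' : Submodule ℂ (ℂ ⊗[ℝ] G)) (R : Submodule ℂ (ℂ ⊗[ℝ] H)) (S : Submodule ℂ (ℂ ⊗[ℝ] J))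
    (ha : Submodule.map (a.baseChange ℂ) P = Q) (hb : Submodule.map (b.baseChange ℂ) Q = Q')
    (hc : Submodule.map (c.baseChange ℂ) Q' ≤ R) (hd : Submodule.map (d.baseChange ℂ) R = S) :
    Submodule.map ((d ∘ₗ c ∘ₗ b ∘ₗ a).baseChange ℂ) P ≤ S := by
  rw [LinearMap.baseChange_comp, LinearMap.baseChange_comp, LinearMap.baseChange_comp,
    Submodule.map_comp, Submodule.map_comp, Submodule.map_comp, ha, hb]
  exact le_trans (Submodule.map_mono hc) (le_of_eq hd)

end Stmt16


open Stmt16 in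
/-- Let `M`, `N` be smooth manifolds (modelled on
`ℂ^ν × ℝ^k` and `ℂ^ν`), `𝒱 ⊆ ℂTM` an elliptic structure and `𝒲 ⊆ ℂTN` a
complex structure (encoded as distributions of complex subspaces of the
complexified tangent spaces, locally equivalent to the standard models via
charts — this encodes involutivity/local integrability), and `f : M → N` a
smooth surjection with `f_*(𝒱_x) = 𝒲_{f(x)}`.  Then every `y ∈ N` has an open
neighbourhood `U` and a smooth section `σ : U → M` of `f` with
`σ_*(𝒲) ⊆ 𝒱`. -/
theorem stmt16 {ν k : ℕ}
    {M : Type*} [TopologicalSpace M] [ChartedSpace ((Fin ν → ℂ) × (Fin k → ℝ)) M]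
    [IsManifold 𝓘(ℝ, (Fin ν → ℂ) × (Fin k → ℝ)) ((⊤ : ℕ∞) : WithTop ℕ∞) M]
    {N : Type*} [TopologicalSpace N] [ChartedSpace (Fin ν → ℂ) N]
    [IsManifold 𝓘(ℝ, Fin ν → ℂ) ((⊤ : ℕ∞) : WithTop ℕ∞) N]
    (V : M → Submodule ℂ (ℂ ⊗[ℝ] ((Fin ν → ℂ) × (Fin k → ℝ))))
    (W : N → Submodule ℂ (ℂ ⊗[ℝ] (Fin ν → ℂ)))
    (hVell : ∀ (x : M) (w : ℂ ⊗[ℝ] ((Fin ν → ℂ) × (Fin k → ℝ))),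
      ∃ a ∈ V x, ∃ b ∈ V x, w = a + conjC _ b)
    (hWsum : ∀ (y : N) (w : ℂ ⊗[ℝ] (Fin ν → ℂ)),
      ∃ a ∈ W y, ∃ b ∈ W y, w = a + conjC _ b)
    (hWdisj : ∀ (y : N), ∀ w ∈ W y, (∃ b ∈ W y, w = conjC _ b) → w = 0)
    (hVchart : ∀ x : M, ∃ e : OpenPartialHomeomorph M ((Fin ν → ℂ) × (Fin k → ℝ)),
      x ∈ e.source ∧
        ContMDiffOn 𝓘(ℝ, (Fin ν → ℂ) × (Fin k → ℝ)) 𝓘(ℝ, (Fin ν → ℂ) × (Fin k → ℝ)) (⊤ : ℕ∞)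
          (⇑e) e.source ∧
        ContMDiffOn 𝓘(ℝ, (Fin ν → ℂ) × (Fin k → ℝ)) 𝓘(ℝ, (Fin ν → ℂ) × (Fin k → ℝ)) (⊤ : ℕ∞)
          (⇑e.symm) e.target ∧
        ∀ y ∈ e.source,
          Submodule.map
            (((mfderiv 𝓘(ℝ, (Fin ν → ℂ) × (Fin k → ℝ))
                𝓘(ℝ, (Fin ν → ℂ) × (Fin k → ℝ)) (⇑e) y).toLinearMap).baseChange ℂ)
            (V y) = Vstd ν k)
    (hWchart : ∀ y : N, ∃ e : OpenPartialHomeomorph N (Fin ν → ℂ),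
      y ∈ e.source ∧
        ContMDiffOn 𝓘(ℝ, Fin ν → ℂ) 𝓘(ℝ, Fin ν → ℂ) (⊤ : ℕ∞) (⇑e) e.source ∧
        ContMDiffOn 𝓘(ℝ, Fin ν → ℂ) 𝓘(ℝ, Fin ν → ℂ) (⊤ : ℕ∞) (⇑e.symm) e.target ∧
        ∀ z ∈ e.source,
          Submodule.map
            (((mfderiv 𝓘(ℝ, Fin ν → ℂ) 𝓘(ℝ, Fin ν → ℂ) (⇑e) z).toLinearMap).baseChange ℂ)
            (W z) = Wstd ν)
    (f : M → N)
    (hf : ContMDiff 𝓘(ℝ, (Fin ν → ℂ) × (Fin k → ℝ)) 𝓘(ℝ, Fin ν → ℂ) (⊤ : ℕ∞) f)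
    (hfsurj : Function.Surjective f)
    (hfV : ∀ x : M,
      Submodule.map
        (((mfderiv 𝓘(ℝ, (Fin ν → ℂ) × (Fin k → ℝ)) 𝓘(ℝ, Fin ν → ℂ) f x).toLinearMap).baseChange ℂ)
        (V x) = W (f x)) :
    ∀ y : N, ∃ (U : Set N) (σ : N → M), IsOpen U ∧ y ∈ U ∧
      ContMDiffOn 𝓘(ℝ, Fin ν → ℂ) 𝓘(ℝ, (Fin ν → ℂ) × (Fin k → ℝ)) (⊤ : ℕ∞) σ U ∧
      (∀ u ∈ U, f (σ u) = u) ∧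
      ∀ u ∈ U,
        Submodule.map
          (((mfderiv 𝓘(ℝ, Fin ν → ℂ) 𝓘(ℝ, (Fin ν → ℂ) × (Fin k → ℝ)) σ u).toLinearMap).baseChange ℂ)
          (W u) ≤ V (σ u) := by
  intro y
  obtain ⟨x0, hx0⟩ := hfsurj y
  obtain ⟨eM, hx0M, heM, heMsymm, hVmap⟩ := hVchart x0
  obtain ⟨eN, hyN, heN, heNsymm, hWmap⟩ := hWchart y
  have hone : ((⊤ : ℕ∞) : WithTop ℕ∞) ≠ 0 := by
    simp
  set G : (Fin ν → ℂ) × (Fin k → ℝ) → (Fin ν → ℂ) := ⇑eN ∘ f ∘ ⇑eM.symm with hGdef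
  set D : Set ((Fin ν → ℂ) × (Fin k → ℝ)) :=
    eM.target ∩ (f ∘ ⇑eM.symm) ⁻¹' eN.source with hDdef
  have hDopen : IsOpen D :=
    (hf.continuous.comp_continuousOn eM.continuousOn_symm).isOpen_inter_preimage
      eM.open_target eN.open_source
  have hGsm : ContMDiffOn 𝓘(ℝ, (Fin ν → ℂ) × (Fin k → ℝ)) 𝓘(ℝ, Fin ν → ℂ) (⊤ : ℕ∞) G D := by
    refine ContMDiffOn.comp (t := eN.source) heN ?_ ?_
    · exact (hf.comp_contMDiffOn heMsymm).mono Set.inter_subset_left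
    · exact fun p hp => hp.2
  have hGcd : ContDiffOn ℝ ((⊤ : ℕ∞) : WithTop ℕ∞) G D := hGsm.contDiffOn
  have hGdiff : ∀ p ∈ D, HasFDerivAt G (fderiv ℝ G p) p := fun p hp =>
    ((hGcd.contDiffAt (hDopen.mem_nhds hp)).differentiableAt hone).hasFDerivAt
  -- the pushforward of Vstd under the derivative of G is Wstd, for every p ∈ D
  have hGmap : ∀ p ∈ D,
      Submodule.map (((fderiv ℝ G p).toLinearMap).baseChange ℂ) (Vstd ν k) = Wstd ν := by
    intro p hp
    have hpt : p ∈ eM.target := hp.1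
    have hqs : eM.symm p ∈ eM.source := eM.map_target hpt
    have hfq : f (eM.symm p) ∈ eN.source := hp.2
    have hdeMs : MDifferentiableAt 𝓘(ℝ, (Fin ν → ℂ) × (Fin k → ℝ))
        𝓘(ℝ, (Fin ν → ℂ) × (Fin k → ℝ)) (⇑eM.symm) p :=
      (heMsymm.contMDiffAt (eM.open_target.mem_nhds hpt)).mdifferentiableAt (by simp)
    have hdf : MDifferentiableAt 𝓘(ℝ, (Fin ν → ℂ) × (Fin k → ℝ)) 𝓘(ℝ, Fin ν → ℂ)
        f (eM.symm p) := (hf (eM.symm p)).mdifferentiableAt (by simp)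
    have hdeN : MDifferentiableAt 𝓘(ℝ, Fin ν → ℂ) 𝓘(ℝ, Fin ν → ℂ) (⇑eN) (f (eM.symm p)) :=
      (heN.contMDiffAt (eN.open_source.mem_nhds hfq)).mdifferentiableAt (by simp)
    have hcomp1 : mfderiv 𝓘(ℝ, (Fin ν → ℂ) × (Fin k → ℝ)) 𝓘(ℝ, Fin ν → ℂ)
        (f ∘ ⇑eM.symm) p
        = (mfderiv 𝓘(ℝ, (Fin ν → ℂ) × (Fin k → ℝ)) 𝓘(ℝ, Fin ν → ℂ) f (eM.symm p)).comp
          (mfderiv 𝓘(ℝ, (Fin ν → ℂ) × (Fin k → ℝ)) 𝓘(ℝ, (Fin ν → ℂ) × (Fin k → ℝ))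
            (⇑eM.symm) p) :=
      mfderiv_comp p hdf hdeMs
    have hcomp2 : mfderiv 𝓘(ℝ, (Fin ν → ℂ) × (Fin k → ℝ)) 𝓘(ℝ, Fin ν → ℂ) G p
        = (mfderiv 𝓘(ℝ, Fin ν → ℂ) 𝓘(ℝ, Fin ν → ℂ) (⇑eN) (f (eM.symm p))).comp
          (mfderiv 𝓘(ℝ, (Fin ν → ℂ) × (Fin k → ℝ)) 𝓘(ℝ, Fin ν → ℂ) (f ∘ ⇑eM.symm) p) :=
      mfderiv_comp p hdeN (hdf.comp p hdeMs)
    have hL : (fderiv ℝ G p).toLinearMap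
        = (mfderiv 𝓘(ℝ, Fin ν → ℂ) 𝓘(ℝ, Fin ν → ℂ) (⇑eN) (f (eM.symm p))).toLinearMap ∘ₗ
          ((mfderiv 𝓘(ℝ, (Fin ν → ℂ) × (Fin k → ℝ)) 𝓘(ℝ, Fin ν → ℂ) f (eM.symm p)).toLinearMap
            ∘ₗ (mfderiv 𝓘(ℝ, (Fin ν → ℂ) × (Fin k → ℝ)) 𝓘(ℝ, (Fin ν → ℂ) × (Fin k → ℝ))
              (⇑eM.symm) p).toLinearMap) := by
      rw [← mfderiv_eq_fderiv, hcomp2, hcomp1]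
      rfl
    have hMinv : Submodule.map
        (((mfderiv 𝓘(ℝ, (Fin ν → ℂ) × (Fin k → ℝ)) 𝓘(ℝ, (Fin ν → ℂ) × (Fin k → ℝ))
          (⇑eM.symm) p).toLinearMap).baseChange ℂ) (Vstd ν k) = V (eM.symm p) := by
      have h1 := (chart_deriv_inverse eM heM heMsymm hqs).1
      rw [eM.right_inv hpt] at h1
      refine map_inverse_of_comp_id _ _ ?_ _ _ (hVmap (eM.symm p) hqs)
      exact congrArg ContinuousLinearMap.toLinearMap h1
    rw [hL]
    exact map_comp3 _ _ _ _ _ _ _ hMinv (hfV (eM.symm p)) (hWmap (f (eM.symm p)) hfq)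
  have hA : ∀ p ∈ D,
      Function.Bijective
        ((fderiv ℝ G p).toLinearMap ∘ₗ LinearMap.inl ℝ (Fin ν → ℂ) (Fin k → ℝ)) ∧
      Submodule.map
        (((fderiv ℝ G p).toLinearMap ∘ₗ LinearMap.inl ℝ (Fin ν → ℂ) (Fin k → ℝ)).baseChange ℂ)
        (Wstd ν) = Wstd ν := by
    intro p hp
    have h2 := (main_la _ (hGmap p hp)).2
    exact ⟨bijective_of_map_Wstd _ h2, h2⟩
  -- the slice map g1
  set z0 : (Fin ν → ℂ) × (Fin k → ℝ) := eM x0 with hz0def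
  set t0 : Fin k → ℝ := z0.2 with ht0def
  set g1 : (Fin ν → ℂ) → (Fin ν → ℂ) := fun z => G (z, t0) with hg1def
  set S : Set (Fin ν → ℂ) := {z | (z, t0) ∈ D} with hSdef
  have hSopen : IsOpen S := hDopen.preimage (continuous_id.prodMk continuous_const)
  have hz0D : z0 ∈ D := by
    constructor
    · exact eM.map_source hx0M
    · show f (eM.symm z0) ∈ eN.source
      rw [hz0def, eM.left_inv hx0M, hx0]
      exact hyN
  have hz0S : z0.1 ∈ S := by
    show (z0.1, t0) ∈ D
    rw [ht0def, Prod.mk.eta]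
    exact hz0D
  have hg1cd : ∀ z ∈ S, ContDiffAt ℝ ((⊤ : ℕ∞) : WithTop ℕ∞) g1 z := by
    intro z hz
    exact (hGcd.contDiffAt (hDopen.mem_nhds hz)).comp (f := fun z => (z, t0)) z
      ((contDiff_id.prodMk contDiff_const).contDiffAt)
  have hg1d : ∀ z ∈ S, HasFDerivAt g1
      ((fderiv ℝ G (z, t0)).comp (ContinuousLinearMap.inl ℝ (Fin ν → ℂ) (Fin k → ℝ))) z :=
    fun z hz => (hGdiff (z, t0) hz).comp (f := fun z => (z, t0)) z (hasFDerivAt_prodMk_left z t0)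
  -- the inverse function theorem at z0.1
  have hA0 := hA z0 hz0D
  let A0eq : (Fin ν → ℂ) ≃L[ℝ] (Fin ν → ℂ) :=
    LinearEquiv.toContinuousLinearEquiv (LinearEquiv.ofBijective _ hA0.1)
  have hA0coe : (A0eq : (Fin ν → ℂ) →L[ℝ] (Fin ν → ℂ))
      = (fderiv ℝ G z0).comp (ContinuousLinearMap.inl ℝ (Fin ν → ℂ) (Fin k → ℝ)) := by
    apply ContinuousLinearMap.ext
    intro v
    rfl
  have hA0d : HasFDerivAt g1 (A0eq : (Fin ν → ℂ) →L[ℝ] (Fin ν → ℂ)) z0.1 := by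
    rw [hA0coe]
    have := hg1d z0.1 hz0S
    rwa [ht0def, Prod.mk.eta] at this
  set Φ : OpenPartialHomeomorph (Fin ν → ℂ) (Fin ν → ℂ) :=
    (hg1cd z0.1 hz0S).toOpenPartialHomeomorph g1 hA0d hone with hΦdef
  have hΦcoe : ⇑Φ = g1 := rfl
  have hz0src : z0.1 ∈ Φ.source :=
    (hg1cd z0.1 hz0S).mem_toOpenPartialHomeomorph_source hA0d hone
  set T' : Set (Fin ν → ℂ) := Φ.target ∩ ⇑Φ.symm ⁻¹' S with hT'def
  have hT'open : IsOpen T' :=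
    Φ.continuousOn_symm.isOpen_inter_preimage Φ.open_target hSopen
  set U : Set N := eN.source ∩ ⇑eN ⁻¹' T' with hUdef
  have hUopen : IsOpen U :=
    heN.continuousOn.isOpen_inter_preimage eN.open_source hT'open
  set σ : N → M := fun u => eM.symm (Φ.symm (eN u), t0) with hσdef
  -- y ∈ U
  have heNy : eN y = Φ z0.1 := by
    rw [hΦcoe]
    show eN y = G (z0.1, t0)
    rw [ht0def, Prod.mk.eta]
    show eN y = eN (f (eM.symm (eM x0)))
    rw [eM.left_inv hx0M, hx0]
  have hyU : y ∈ U := by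
    refine ⟨hyN, ?_, ?_⟩
    · show eN y ∈ Φ.target
      rw [heNy]
      exact Φ.map_source hz0src
    · show Φ.symm (eN y) ∈ S
      rw [heNy, Φ.left_inv hz0src]
      exact hz0S
  -- basic facts for u ∈ U
  have hUfact : ∀ u ∈ U, (Φ.symm (eN u), t0) ∈ D ∧ Φ (Φ.symm (eN u)) = eN u := by
    intro u hu
    exact ⟨hu.2.2, Φ.right_inv hu.2.1⟩
  -- smoothness of Φ.symm on T'
  have hΦsymm_cd : ∀ w ∈ T', ContDiffAt ℝ ((⊤ : ℕ∞) : WithTop ℕ∞) (⇑Φ.symm) w := by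
    intro w hw
    have hzuS : Φ.symm w ∈ S := hw.2
    have hApu := hA (Φ.symm w, t0) hzuS
    let Aeq : (Fin ν → ℂ) ≃L[ℝ] (Fin ν → ℂ) :=
      LinearEquiv.toContinuousLinearEquiv (LinearEquiv.ofBijective _ hApu.1)
    have hAcoe : (Aeq : (Fin ν → ℂ) →L[ℝ] (Fin ν → ℂ))
        = (fderiv ℝ G (Φ.symm w, t0)).comp
          (ContinuousLinearMap.inl ℝ (Fin ν → ℂ) (Fin k → ℝ)) := by
      apply ContinuousLinearMap.ext
      intro v
      rfl
    refine Φ.contDiffAt_symm (f₀' := Aeq) hw.1 ?_ ?_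
    · rw [hAcoe, hΦcoe]
      exact hg1d (Φ.symm w) hzuS
    · rw [hΦcoe]
      exact hg1cd (Φ.symm w) hzuS
  -- smoothness of σ on U
  have hσsm : ContMDiffOn 𝓘(ℝ, Fin ν → ℂ) 𝓘(ℝ, (Fin ν → ℂ) × (Fin k → ℝ)) (⊤ : ℕ∞) σ U := by
    have hψ : ContMDiffOn 𝓘(ℝ, Fin ν → ℂ) 𝓘(ℝ, (Fin ν → ℂ) × (Fin k → ℝ)) (⊤ : ℕ∞)
        (fun z => (Φ.symm z, t0)) T' := by
      apply ContDiffOn.contMDiffOn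
      apply ContDiffOn.prodMk
      · intro w hw
        exact (hΦsymm_cd w hw).contDiffWithinAt
      · exact contDiffOn_const
    have hcomp : ContMDiffOn 𝓘(ℝ, Fin ν → ℂ) 𝓘(ℝ, (Fin ν → ℂ) × (Fin k → ℝ)) (⊤ : ℕ∞)
        ((fun z => (Φ.symm z, t0)) ∘ ⇑eN) U :=
      hψ.comp (heN.mono Set.inter_subset_left) (fun u hu => hu.2)
    have : ContMDiffOn 𝓘(ℝ, Fin ν → ℂ) 𝓘(ℝ, (Fin ν → ℂ) × (Fin k → ℝ)) (⊤ : ℕ∞)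
        (⇑eM.symm ∘ ((fun z => (Φ.symm z, t0)) ∘ ⇑eN)) U := by
      refine heMsymm.comp hcomp ?_
      intro u hu
      exact ((hUfact u hu).1).1
    exact this
  -- the section property
  have hsec : ∀ u ∈ U, f (σ u) = u := by
    intro u hu
    obtain ⟨hpuD, hΦΦ⟩ := hUfact u hu
    have hfs : f (σ u) ∈ eN.source := hpuD.2
    have : eN (f (σ u)) = eN u := by
      show G (Φ.symm (eN u), t0) = eN u
      calc G (Φ.symm (eN u), t0) = g1 (Φ.symm (eN u)) := rfl
        _ = Φ (Φ.symm (eN u)) := rfl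
        _ = eN u := hΦΦ
    exact eN.injOn hfs hu.1 this
  refine ⟨U, σ, hUopen, hyU, hσsm, hsec, ?_⟩
  -- the derivative condition
  intro u hu
  obtain ⟨hpuD, hΦΦ⟩ := hUfact u hu
  have hws : eN u ∈ Φ.target := hu.2.1
  have hzuS : Φ.symm (eN u) ∈ S := hu.2.2
  have hqs : eM.symm (Φ.symm (eN u), t0) ∈ eM.source := eM.map_target hpuD.1
  -- derivative of Φ.symm
  have hsymm_diff : DifferentiableAt ℝ (⇑Φ.symm) (eN u) :=
    (hΦsymm_cd (eN u) hu.2).differentiableAt hone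
  set B : (Fin ν → ℂ) →L[ℝ] (Fin ν → ℂ) := fderiv ℝ (⇑Φ.symm) (eN u) with hBdef
  set Acl : (Fin ν → ℂ) →L[ℝ] (Fin ν → ℂ) :=
    (fderiv ℝ G (Φ.symm (eN u), t0)).comp
      (ContinuousLinearMap.inl ℝ (Fin ν → ℂ) (Fin k → ℝ)) with hAcldef
  have hΦd : HasFDerivAt (⇑Φ) Acl (Φ.symm (eN u)) := by
    rw [hΦcoe]
    exact hg1d (Φ.symm (eN u)) hzuS
  have hABid : Acl.comp B = ContinuousLinearMap.id ℝ (Fin ν → ℂ) := by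
    have hcompfd : HasFDerivAt (⇑Φ ∘ ⇑Φ.symm) (Acl.comp B) (eN u) :=
      hΦd.comp (eN u) hsymm_diff.hasFDerivAt
    have hev : (⇑Φ ∘ ⇑Φ.symm) =ᶠ[nhds (eN u)] id := by
      filter_upwards [Φ.open_target.mem_nhds hws] with x hx
      exact Φ.right_inv hx
    have hidd : HasFDerivAt (id : (Fin ν → ℂ) → (Fin ν → ℂ)) (Acl.comp B) (eN u) :=
      hcompfd.congr_of_eventuallyEq hev.symm
    exact hidd.unique (hasFDerivAt_id (eN u))
  -- mfderiv decomposition of σ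
  have hdeN : MDifferentiableAt 𝓘(ℝ, Fin ν → ℂ) 𝓘(ℝ, Fin ν → ℂ) (⇑eN) u :=
    (heN.contMDiffAt (eN.open_source.mem_nhds hu.1)).mdifferentiableAt (by simp)
  have hψd : HasFDerivAt (fun z => (Φ.symm z, t0))
      ((ContinuousLinearMap.inl ℝ (Fin ν → ℂ) (Fin k → ℝ)).comp B) (eN u) := by
    have h1 : HasFDerivAt (fun z => (Φ.symm z, t0)) (B.prod 0) (eN u) :=
      hsymm_diff.hasFDerivAt.prodMk (hasFDerivAt_const t0 (eN u))
    have h2 : B.prod 0 = (ContinuousLinearMap.inl ℝ (Fin ν → ℂ) (Fin k → ℝ)).comp B := by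
      apply ContinuousLinearMap.ext
      intro v
      rfl
    rwa [h2] at h1
  have hdψ : MDifferentiableAt 𝓘(ℝ, Fin ν → ℂ) 𝓘(ℝ, (Fin ν → ℂ) × (Fin k → ℝ))
      (fun z => (Φ.symm z, t0)) (eN u) :=
    hψd.differentiableAt.mdifferentiableAt
  have hdeMs : MDifferentiableAt 𝓘(ℝ, (Fin ν → ℂ) × (Fin k → ℝ))
      𝓘(ℝ, (Fin ν → ℂ) × (Fin k → ℝ)) (⇑eM.symm) (Φ.symm (eN u), t0) :=
    (heMsymm.contMDiffAt (eM.open_target.mem_nhds hpuD.1)).mdifferentiableAt (by simp)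
  have hinner : mfderiv 𝓘(ℝ, Fin ν → ℂ) 𝓘(ℝ, (Fin ν → ℂ) × (Fin k → ℝ))
      ((fun z => (Φ.symm z, t0)) ∘ ⇑eN) u
      = (mfderiv 𝓘(ℝ, Fin ν → ℂ) 𝓘(ℝ, (Fin ν → ℂ) × (Fin k → ℝ))
          (fun z => (Φ.symm z, t0)) (eN u)).comp
        (mfderiv 𝓘(ℝ, Fin ν → ℂ) 𝓘(ℝ, Fin ν → ℂ) (⇑eN) u) :=
    mfderiv_comp u hdψ hdeN
  have houter : mfderiv 𝓘(ℝ, Fin ν → ℂ) 𝓘(ℝ, (Fin ν → ℂ) × (Fin k → ℝ)) σ u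
      = (mfderiv 𝓘(ℝ, (Fin ν → ℂ) × (Fin k → ℝ)) 𝓘(ℝ, (Fin ν → ℂ) × (Fin k → ℝ))
          (⇑eM.symm) (Φ.symm (eN u), t0)).comp
        (mfderiv 𝓘(ℝ, Fin ν → ℂ) 𝓘(ℝ, (Fin ν → ℂ) × (Fin k → ℝ))
          ((fun z => (Φ.symm z, t0)) ∘ ⇑eN) u) :=
    mfderiv_comp u hdeMs (hdψ.comp u hdeN)
  have hψfd : mfderiv 𝓘(ℝ, Fin ν → ℂ) 𝓘(ℝ, (Fin ν → ℂ) × (Fin k → ℝ))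
      (fun z => (Φ.symm z, t0)) (eN u)
      = (ContinuousLinearMap.inl ℝ (Fin ν → ℂ) (Fin k → ℝ)).comp B := by
    rw [mfderiv_eq_fderiv]
    exact hψd.fderiv
  have hLσ : (mfderiv 𝓘(ℝ, Fin ν → ℂ) 𝓘(ℝ, (Fin ν → ℂ) × (Fin k → ℝ)) σ u).toLinearMap
      = (mfderiv 𝓘(ℝ, (Fin ν → ℂ) × (Fin k → ℝ)) 𝓘(ℝ, (Fin ν → ℂ) × (Fin k → ℝ))
          (⇑eM.symm) (Φ.symm (eN u), t0)).toLinearMap ∘ₗ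
        (LinearMap.inl ℝ (Fin ν → ℂ) (Fin k → ℝ) ∘ₗ
          ((B : (Fin ν → ℂ) →ₗ[ℝ] (Fin ν → ℂ)) ∘ₗ
            (mfderiv 𝓘(ℝ, Fin ν → ℂ) 𝓘(ℝ, Fin ν → ℂ) (⇑eN) u).toLinearMap)) := by
    rw [houter, hinner, hψfd]
    rfl
  have hALB : ((fderiv ℝ G (Φ.symm (eN u), t0)).toLinearMap ∘ₗ
      LinearMap.inl ℝ (Fin ν → ℂ) (Fin k → ℝ)) ∘ₗ (B : (Fin ν → ℂ) →ₗ[ℝ] (Fin ν → ℂ))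
      = LinearMap.id := by
    apply LinearMap.ext
    intro v
    have h1 := ContinuousLinearMap.ext_iff.mp hABid v
    exact h1
  have hBW : Submodule.map (((B : (Fin ν → ℂ) →ₗ[ℝ] (Fin ν → ℂ))).baseChange ℂ) (Wstd ν)
      = Wstd ν :=
    map_Wstd_inverse _ _ (hA (Φ.symm (eN u), t0) hpuD).2 hALB
  have hMinv : Submodule.map
      (((mfderiv 𝓘(ℝ, (Fin ν → ℂ) × (Fin k → ℝ)) 𝓘(ℝ, (Fin ν → ℂ) × (Fin k → ℝ))
        (⇑eM.symm) (Φ.symm (eN u), t0)).toLinearMap).baseChange ℂ) (Vstd ν k)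
      = V (eM.symm (Φ.symm (eN u), t0)) := by
    have h1 := (chart_deriv_inverse eM heM heMsymm hqs).1
    rw [eM.right_inv hpuD.1] at h1
    refine map_inverse_of_comp_id _ _ ?_ _ _ (hVmap _ hqs)
    exact congrArg ContinuousLinearMap.toLinearMap h1
  rw [hLσ]
  exact map_comp4_le _ _ _ _ _ _ _ _ _ (hWmap u hu.1) hBW map_inl_Wstd_le hMinv
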